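/- Let O be a finite nonempty set, ≿ a total preorder on O, and l, l' ∈ ℝ_{≥0}^O two lotteries with equal total mass Σ_o l_o = Σ_o l'_o. Then l ≿^sd l' if and only if there exists a nonnegative coupling T ∈ ℝ_{≥0}^{O×O} such that (i) Σ_{b ∈ O} T_{a,b} = l'_a for every a ∈ O, (ii) Σ_{a ∈ O} T_{a,b} = l_b for every b ∈ O, and (iii) T_{a,b} > 0 implies b ≿ a. That is, l stochastically dominates l' exactly when l can be obtained from l' by transferring probability mass only from objects to weakly preferred objects. -/

import Mathlib

open Finset

/-- Lottery `l` weakly stochastically dominates `l'` with respect to the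
preference (total preorder) `R`. -/
def SDom {O : Type*} [Fintype O] (R : O → O → Prop) [DecidableRel R]
    (l l' : O → ℝ) : Prop :=
  ∀ o : O,
    ∑ o' ∈ univ.filter (fun o' => R o' o), l' o' ≤
      ∑ o' ∈ univ.filter (fun o' => R o' o), l o'

private lemma clamp_diff (c d u v : ℝ) (hcd : c ≤ d) (huv : u ≤ v) :
    min d (max c v) - min d (max c u) = max (min d v - max c u) 0 := by
  rcases le_total d v with h1 | h1 <;> rcases le_total c u with h2 | h2 <;>
    rcases le_total d u with h3 | h3 <;> rcases le_total c v with h4 | h4 <;>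
    simp [min_def, max_def] <;> split_ifs <;> linarith

private lemma sd_coupling_exists {O : Type*} [Fintype O] [Nonempty O] [DecidableEq O]
    (R : O → O → Prop) [DecidableRel R]
    (htotal : Total R) (htrans : Transitive R)
    (l l' : O → ℝ)
    (hl : ∀ o, 0 ≤ l o) (hl' : ∀ o, 0 ≤ l' o)
    (hmass : ∑ o, l o = ∑ o, l' o)
    (hsd : SDom R l l') :
    ∃ T : O → O → ℝ,
      (∀ a b, 0 ≤ T a b) ∧
      (∀ a, ∑ b, T a b = l' a) ∧
      (∀ b, ∑ a, T a b = l b) ∧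
      (∀ a b, 0 < T a b → R b a) := by
  classical
  have hrefl : ∀ a, R a a := fun a => (htotal a a).elim id id
  set L : List O := (Finset.univ.toList (α := O)).mergeSort (fun a b => decide (R a b))
    with hLdef
  have hperm : L.Perm Finset.univ.toList := List.mergeSort_perm _ _
  have hmem : ∀ o : O, o ∈ L := fun o => hperm.mem_iff.2 (Finset.mem_toList.2 (mem_univ o))
  have hnd : L.Nodup := hperm.nodup_iff.2 (Finset.nodup_toList _)
  have hsortP : List.Pairwise (fun a b => R a b) L := by
    have h := List.pairwise_mergeSort (le := fun a b : O => decide (R a b))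
      (fun a b c h1 h2 => by
        simp only [decide_eq_true_eq] at *
        exact htrans h1 h2)
      (fun a b => by
        simp only [Bool.or_eq_true, decide_eq_true_eq]
        exact htotal a b)
      (Finset.univ.toList (α := O))
    rw [← hLdef] at h
    exact h.imp (fun hab => by simpa using hab)
  set n : ℕ := L.length with hn
  set e : ℕ → O := fun i => L.getD i (Classical.arbitrary O) with he
  have heget : ∀ i (h : i < n), e i = L[i] := fun i h => List.getD_eq_getElem L _ h
  set idx : O → ℕ := fun o => L.idxOf o with hidx
  have hidx_lt : ∀ o, idx o < n := fun o => List.idxOf_lt_length_iff.2 (hmem o)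
  have hE_idx : ∀ o, e (idx o) = o := fun o => by
    rw [heget _ (hidx_lt o)]; exact List.getElem_idxOf _
  have hidx_e : ∀ i, i < n → idx (e i) = i := fun i h => by
    rw [heget _ h]; exact List.Nodup.idxOf_getElem hnd i h
  have hEsort : ∀ i j, i ≤ j → j < n → R (e i) (e j) := by
    intro i j hij hj
    rcases eq_or_lt_of_le hij with rfl | hij'
    · exact hrefl _
    · rw [heget i (hij'.trans hj), heget j hj]
      have := hsortP.rel_get_of_lt (a := ⟨i, hij'.trans hj⟩) (b := ⟨j, hj⟩) hij'
      simpa [List.get_eq_getElem] using this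
  -- sum conversion
  have hconv : ∀ F : O → ℝ, ∑ o, F o = ∑ k ∈ range n, F (e k) := by
    intro F
    refine Finset.sum_nbij' (i := fun o => idx o) (j := fun k => e k) ?_ ?_ ?_ ?_ ?_
    · intro a _; exact mem_range.2 (hidx_lt a)
    · intro k _; exact mem_univ _
    · intro a _; exact hE_idx a
    · intro k hk; exact hidx_e k (mem_range.1 hk)
    · intro a _; rw [hE_idx a]
  set Sl : ℕ → ℝ := fun k => ∑ j ∈ range k, l (e j) with hSl
  set Sl' : ℕ → ℝ := fun k => ∑ j ∈ range k, l' (e j) with hSl'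
  have hSl_mono : ∀ j k, j ≤ k → Sl j ≤ Sl k := fun j k hjk =>
    Finset.sum_le_sum_of_subset_of_nonneg (Finset.range_subset_range.2 hjk)
      (fun i _ _ => hl (e i))
  have hSl'_mono : ∀ j k, j ≤ k → Sl' j ≤ Sl' k := fun j k hjk =>
    Finset.sum_le_sum_of_subset_of_nonneg (Finset.range_subset_range.2 hjk)
      (fun i _ _ => hl' (e i))
  have hSl0 : Sl 0 = 0 := by simp [hSl]
  have hSl'0 : Sl' 0 = 0 := by simp [hSl']
  have hSln : Sl n = ∑ o, l o := (hconv l).symm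
  have hSl'n : Sl' n = ∑ o, l' o := (hconv l').symm
  have hSl_step : ∀ k, Sl (k + 1) = Sl k + l (e k) := fun k => Finset.sum_range_succ _ k
  have hSl'_step : ∀ k, Sl' (k + 1) = Sl' k + l' (e k) := fun k => Finset.sum_range_succ _ k
  -- prefix sums vs filter sums
  have himage_inj : ∀ m, m ≤ n → ∀ x ∈ range m, ∀ y ∈ range m, e x = e y → x = y := by
    intro m hm x hx y hy hxy
    rw [← hidx_e x ((mem_range.1 hx).trans_le hm), ← hidx_e y ((mem_range.1 hy).trans_le hm),
      hxy]
  have hupper : ∀ a : O, Sl' (idx a + 1) ≤ ∑ x ∈ univ.filter (fun x => R x a), l' x := by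
    intro a
    have h1 : Sl' (idx a + 1) = ∑ x ∈ (range (idx a + 1)).image e, l' x :=
      (Finset.sum_image (himage_inj (idx a + 1) (hidx_lt a))).symm
    rw [h1]
    refine Finset.sum_le_sum_of_subset_of_nonneg ?_ (fun x _ _ => hl' x)
    intro x hx
    obtain ⟨j, hj, rfl⟩ := Finset.mem_image.1 hx
    refine mem_filter.2 ⟨mem_univ _, ?_⟩
    have : R (e j) (e (idx a)) :=
      hEsort j (idx a) (Nat.lt_succ_iff.1 (mem_range.1 hj)) (hidx_lt a)
    rwa [hE_idx a] at this
  have hlower : ∀ a b : O, ¬ R b a →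
      ∑ x ∈ univ.filter (fun x => R x a), l x ≤ Sl (idx b) := by
    intro a b hnR
    have h1 : Sl (idx b) = ∑ x ∈ (range (idx b)).image e, l x :=
      (Finset.sum_image (himage_inj (idx b) (hidx_lt b).le)).symm
    rw [h1]
    refine Finset.sum_le_sum_of_subset_of_nonneg ?_ (fun x _ _ => hl x)
    intro x hx
    have hxa : R x a := (mem_filter.1 hx).2
    refine Finset.mem_image.2 ⟨idx x, mem_range.2 ?_, hE_idx x⟩
    by_contra hge
    push_neg at hge
    have hbx : R b x := by
      have := hEsort (idx b) (idx x) hge (hidx_lt x)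
      rwa [hE_idx b, hE_idx x] at this
    exact hnR (htrans hbx hxa)
  -- the coupling
  set T : O → O → ℝ := fun a b =>
    max (min (Sl' (idx a + 1)) (Sl (idx b + 1)) - max (Sl' (idx a)) (Sl (idx b))) 0
    with hT
  refine ⟨T, fun a b => le_max_right _ _, ?_, ?_, ?_⟩
  · -- row sums
    intro a
    set c : ℝ := Sl' (idx a) with hc
    set d : ℝ := Sl' (idx a + 1) with hd
    have hcd : c ≤ d := hSl'_mono _ _ (Nat.le_succ _)
    have hrow : ∑ b, T a b = ∑ k ∈ range n,
        (min d (max c (Sl (k + 1))) - min d (max c (Sl k))) := by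
      rw [hconv (fun b => T a b)]
      refine Finset.sum_congr rfl ?_
      intro k hk
      have hik : idx (e k) = k := hidx_e k (mem_range.1 hk)
      simp only [hT, hik]
      rw [clamp_diff c d (Sl k) (Sl (k + 1)) hcd (hSl_mono _ _ (Nat.le_succ _))]
    rw [hrow, Finset.sum_range_sub (fun k => min d (max c (Sl k))) n]
    have h0 : min d (max c (Sl 0)) = c := by
      rw [hSl0]
      have hc0 : 0 ≤ c := Finset.sum_nonneg (fun i _ => hl' (e i))
      rw [max_eq_left hc0, min_eq_right hcd]
    have hnn : min d (max c (Sl n)) = d := by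
      have hdn : d ≤ Sl n := by
        rw [hSln, hmass, ← hSl'n]
        exact hSl'_mono _ _ (hidx_lt a)
      rw [max_eq_right (hcd.trans hdn), min_eq_left hdn]
    rw [h0, hnn, hd, hc, hSl'_step, hE_idx a]
    ring
  · -- column sums
    intro b
    set c : ℝ := Sl (idx b) with hc
    set d : ℝ := Sl (idx b + 1) with hd
    have hcd : c ≤ d := hSl_mono _ _ (Nat.le_succ _)
    have hcol : ∑ a, T a b = ∑ i ∈ range n,
        (min d (max c (Sl' (i + 1))) - min d (max c (Sl' i))) := by
      rw [hconv (fun a => T a b)]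
      refine Finset.sum_congr rfl ?_
      intro i hi
      have hii : idx (e i) = i := hidx_e i (mem_range.1 hi)
      simp only [hT, hii]
      rw [clamp_diff c d (Sl' i) (Sl' (i + 1)) hcd (hSl'_mono _ _ (Nat.le_succ _)),
        ← hd, ← hc, min_comm d, max_comm c]
    rw [hcol, Finset.sum_range_sub (fun i => min d (max c (Sl' i))) n]
    have h0 : min d (max c (Sl' 0)) = c := by
      rw [hSl'0]
      have hc0 : 0 ≤ c := Finset.sum_nonneg (fun i _ => hl (e i))
      rw [max_eq_left hc0, min_eq_right hcd]
    have hnn : min d (max c (Sl' n)) = d := by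
      have hdn : d ≤ Sl' n := by
        rw [hSl'n, ← hmass, ← hSln]
        exact hSl_mono _ _ (hidx_lt b)
      rw [max_eq_right (hcd.trans hdn), min_eq_left hdn]
    rw [h0, hnn, hd, hc, hSl_step, hE_idx b]
    ring
  · -- monotonicity
    intro a b hpos
    by_contra hnR
    have hx : 0 < min (Sl' (idx a + 1)) (Sl (idx b + 1)) - max (Sl' (idx a)) (Sl (idx b)) := by
      by_contra hle
      push_neg at hle
      rw [hT] at hpos
      simp only [max_eq_right hle] at hpos
      exact lt_irrefl 0 hpos
    have h1 : Sl (idx b) < Sl' (idx a + 1) := by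
      have := lt_of_le_of_lt (le_max_right (Sl' (idx a)) (Sl (idx b)))
        (by linarith [min_le_left (Sl' (idx a + 1)) (Sl (idx b + 1))] :
          max (Sl' (idx a)) (Sl (idx b)) < Sl' (idx a + 1))
      exact this
    have h2 : Sl' (idx a + 1) ≤ Sl (idx b) :=
      le_trans (hupper a) (le_trans (hsd a) (hlower a b hnR))
    linarith

theorem sd_iff_monotone_coupling {O : Type*} [Fintype O] [Nonempty O]
    (R : O → O → Prop) [DecidableRel R]
    (htotal : Total R) (htrans : Transitive R)
    (l l' : O → ℝ)
    (hl : ∀ o, 0 ≤ l o) (hl' : ∀ o, 0 ≤ l' o)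
    (hmass : ∑ o, l o = ∑ o, l' o) :
    SDom R l l' ↔
      ∃ T : O → O → ℝ,
        (∀ a b, 0 ≤ T a b) ∧
        (∀ a, ∑ b, T a b = l' a) ∧
        (∀ b, ∑ a, T a b = l b) ∧
        (∀ a b, 0 < T a b → R b a) := by
  classical
  constructor
  · exact sd_coupling_exists R htotal htrans l l' hl hl' hmass
  · rintro ⟨T, hT0, hrow, hcol, hmono⟩ o
    have hstep : ∀ x ∈ univ.filter (fun x => R x o),
        l' x = ∑ b ∈ univ.filter (fun b => R b o), T x b := by
      intro x hx
      have hxo : R x o := (mem_filter.1 hx).2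
      rw [← hrow x]
      refine (Finset.sum_filter_of_ne ?_).symm
      intro b _ hb
      have hpos : 0 < T x b := lt_of_le_of_ne (hT0 x b) (Ne.symm hb)
      exact htrans (hmono x b hpos) hxo
    calc ∑ x ∈ univ.filter (fun x => R x o), l' x
        = ∑ x ∈ univ.filter (fun x => R x o), ∑ b ∈ univ.filter (fun b => R b o), T x b :=
          Finset.sum_congr rfl hstep
      _ ≤ ∑ x, ∑ b ∈ univ.filter (fun b => R b o), T x b :=
          Finset.sum_le_sum_of_subset_of_nonneg (filter_subset _ _)
            (fun x _ _ => Finset.sum_nonneg (fun b _ => hT0 x b))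
      _ = ∑ b ∈ univ.filter (fun b => R b o), ∑ x, T x b := Finset.sum_comm
      _ = ∑ b ∈ univ.filter (fun b => R b o), l b :=
          Finset.sum_congr rfl (fun b _ => hcol b)
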